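/- In any 2-layer fan-planar drawing of a bipartite graph G, every vertex v has at most four neighbors of degree at least 3 in G. -/

import Mathlib

variable {V : Type*}

/-- A bipartite graph with layers `X` and `Y`; each edge is a pair `(x, y)` with
`x ∈ X` and `y ∈ Y`. -/
structure BipGraph (V : Type*) where
  X : Set V
  Y : Set V
  disj : Disjoint X Y
  E : Set (V × V)
  mem_fst : ∀ e ∈ E, e.1 ∈ X
  mem_snd : ∀ e ∈ E, e.2 ∈ Y

def BipGraph.Adj (G : BipGraph V) (a b : V) : Prop := (a, b) ∈ G.E ∨ (b, a) ∈ G.E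

/-- Open neighborhood. -/
def BipGraph.nbhd (G : BipGraph V) (v : V) : Set V := {u | G.Adj v u}

noncomputable def BipGraph.deg (G : BipGraph V) (v : V) : ℕ := (G.nbhd v).ncard

/-- Two edges cross in the 2-layer drawing given by positions `px`, `py`. -/
def Cross (px py : V → ℝ) (e f : V × V) : Prop :=
  (px e.1 < px f.1 ∧ py f.2 < py e.2) ∨ (px f.1 < px e.1 ∧ py e.2 < py f.2)

/-- `(px, py)` encodes a 2-layer drawing of `G`: positions are injective on each layer. -/
def IsDrawing (G : BipGraph V) (px py : V → ℝ) : Prop :=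
  Set.InjOn px G.X ∧ Set.InjOn py G.Y

/-- A drawing is fan-planar if for each edge, all edges crossing it share a common endpoint. -/
def FanPlanar (G : BipGraph V) (px py : V → ℝ) : Prop :=
  ∀ e ∈ G.E, ∃ c : V, ∀ f ∈ G.E, Cross px py e f → f.1 = c ∨ f.2 = c

def AdmitsFanPlanar (G : BipGraph V) : Prop :=
  ∃ px py : V → ℝ, IsDrawing G px py ∧ FanPlanar G px py

/-- Three edges that pairwise share no endpoint (form a matching). -/
def PairwiseDisjoint3 (e f f' : V × V) : Prop :=
  e.1 ≠ f.1 ∧ e.1 ≠ f'.1 ∧ f.1 ≠ f'.1 ∧ e.2 ≠ f.2 ∧ e.2 ≠ f'.2 ∧ f.2 ≠ f'.2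

/-- A violating triple: `f` and `f'` both cross `e` and the three edges form a matching. -/
def ViolatingTriple (G : BipGraph V) (px py : V → ℝ) (e f f' : V × V) : Prop :=
  e ∈ G.E ∧ f ∈ G.E ∧ f' ∈ G.E ∧ Cross px py e f ∧ Cross px py e f' ∧
    PairwiseDisjoint3 e f f'

/-- Induced subgraph with a vertex deleted. -/
def BipGraph.deleteVert (G : BipGraph V) (w : V) : BipGraph V where
  X := G.X \ {w}
  Y := G.Y \ {w}
  disj := G.disj.mono Set.diff_subset Set.diff_subset
  E := {e ∈ G.E | e.1 ≠ w ∧ e.2 ≠ w}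
  mem_fst := fun e he => ⟨G.mem_fst e he.1, he.2.1⟩
  mem_snd := fun e he => ⟨G.mem_snd e he.1, he.2.2⟩

def NoIsolated (G : BipGraph V) : Prop := ∀ v ∈ G.X ∪ G.Y, (G.nbhd v).Nonempty

private lemma crossR {p q : ℝ × ℝ}
    (h : (p.1 < q.1 ∧ q.2 < p.2) ∨ (q.1 < p.1 ∧ p.2 < q.2)) :
    Cross (id : ℝ → ℝ) id p q := h

private lemma pd3 {e f f' : ℝ × ℝ}
    (h : e.1 ≠ f.1 ∧ e.1 ≠ f'.1 ∧ f.1 ≠ f'.1 ∧ e.2 ≠ f.2 ∧ e.2 ≠ f'.2 ∧ f.2 ≠ f'.2) :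
    PairwiseDisjoint3 e f f' := h

private lemma core (S : Set (ℝ × ℝ))
    (H : ∀ e ∈ S, ∀ f ∈ S, ∀ f' ∈ S,
      Cross id id e f → Cross id id e f' → ¬ PairwiseDisjoint3 e f f')
    {x y1 y2 y3 y4 y5 : ℝ}
    (o12 : y1 < y2) (o23 : y2 < y3) (o34 : y3 < y4) (o45 : y4 < y5)
    (m1 : (x, y1) ∈ S) (m5 : (x, y5) ∈ S)
    (h2 : ∃ a b : ℝ, a ≠ b ∧ a ≠ x ∧ b ≠ x ∧ (a, y2) ∈ S ∧ (b, y2) ∈ S)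
    (h3 : ∃ a b : ℝ, a ≠ b ∧ a ≠ x ∧ b ≠ x ∧ (a, y3) ∈ S ∧ (b, y3) ∈ S)
    (h4 : ∃ a b : ℝ, a ≠ b ∧ a ≠ x ∧ b ≠ x ∧ (a, y4) ∈ S ∧ (b, y4) ∈ S) :
    False := by
  obtain ⟨a3, b3, hab3, ha3, hb3, ma3, mb3⟩ := h3
  obtain ⟨a4, b4, hab4, ha4, hb4, ma4, mb4⟩ := h4
  obtain ⟨a2, b2, hab2, ha2, hb2, ma2, mb2⟩ := h2
  by_cases hr : x < a3 ∨ x < b3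
  · -- y3 has a neighbour strictly to the right of x
    obtain ⟨c, hc, mc⟩ : ∃ c, x < c ∧ (c, y3) ∈ S := by
      rcases hr with h | h
      exacts [⟨a3, h, ma3⟩, ⟨b3, h, mb3⟩]
    by_cases hl : a4 < x ∨ b4 < x
    · -- y4 has a neighbour strictly to the left of x : triple around (c, y3)
      obtain ⟨d, hd, md⟩ : ∃ d, d < x ∧ (d, y4) ∈ S := by
        rcases hl with h | h
        exacts [⟨a4, h, ma4⟩, ⟨b4, h, mb4⟩]
      exact H _ mc _ m5 _ md
        (crossR (Or.inr ⟨hc, by linarith⟩))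
        (crossR (Or.inr ⟨by linarith, o34⟩))
        (pd3 ⟨ne_of_gt hc, ne_of_gt (by linarith), ne_of_gt hd,
          ne_of_lt (by linarith), ne_of_lt o34, ne_of_gt o45⟩)
    · -- all neighbours of y4 are to the right of x
      push_neg at hl
      have hxa4 : x < a4 := (hl.1).lt_of_ne' ha4
      have hxb4 : x < b4 := (hl.2).lt_of_ne' hb4
      obtain ⟨t, htx, htc, mt⟩ : ∃ t, x < t ∧ t ≠ c ∧ (t, y4) ∈ S := by
        by_cases h : a4 = c
        · exact ⟨b4, hxb4, fun e => hab4 (h.trans e.symm), mb4⟩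
        · exact ⟨a4, hxa4, h, ma4⟩
      exact H _ m5 _ mc _ mt
        (crossR (Or.inl ⟨hc, by linarith⟩))
        (crossR (Or.inl ⟨htx, o45⟩))
        (pd3 ⟨ne_of_lt hc, ne_of_lt htx, htc.symm,
          ne_of_gt (by linarith), ne_of_gt o45, ne_of_lt o34⟩)
  · -- all neighbours of y3 are to the left of x
    push_neg at hr
    have ha3x : a3 < x := (hr.1).lt_of_ne ha3
    have hb3x : b3 < x := (hr.2).lt_of_ne hb3
    by_cases hl2 : x < a2 ∨ x < b2
    · -- y2 has a neighbour strictly to the right of x : triple around (a3, y3)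
      obtain ⟨d, hd, md⟩ : ∃ d, x < d ∧ (d, y2) ∈ S := by
        rcases hl2 with h | h
        exacts [⟨a2, h, ma2⟩, ⟨b2, h, mb2⟩]
      exact H _ ma3 _ m1 _ md
        (crossR (Or.inl ⟨ha3x, by linarith⟩))
        (crossR (Or.inl ⟨by linarith, o23⟩))
        (pd3 ⟨ha3, ne_of_lt (by linarith), ne_of_lt hd,
          ne_of_gt (by linarith), ne_of_gt o23, ne_of_lt o12⟩)
    · -- all neighbours of y2 are to the left of x
      push_neg at hl2
      have ha2x : a2 < x := (hl2.1).lt_of_ne ha2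
      have hb2x : b2 < x := (hl2.2).lt_of_ne hb2
      obtain ⟨s, hs, hsa3, ms⟩ : ∃ s, s < x ∧ s ≠ a3 ∧ (s, y2) ∈ S := by
        by_cases h : a2 = a3
        · exact ⟨b2, hb2x, fun e => hab2 (h.trans e.symm), mb2⟩
        · exact ⟨a2, ha2x, h, ma2⟩
      exact H _ m1 _ ms _ ma3
        (crossR (Or.inr ⟨hs, o12⟩))
        (crossR (Or.inr ⟨ha3x, by linarith⟩))
        (pd3 ⟨ne_of_gt hs, ne_of_gt ha3x, hsa3,
          ne_of_lt o12, ne_of_lt (by linarith), ne_of_lt o23⟩)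

/-- Main case: every edge at `v` has `v` on the `X` side. -/
private lemma caseA (G : BipGraph V) (px py : V → ℝ) (hD : IsDrawing G px py)
    (hfan : FanPlanar G px py) (v : V)
    (hv : ∀ u, G.Adj v u → (v, u) ∈ G.E) :
    {u ∈ G.nbhd v | 3 ≤ G.deg u}.ncard ≤ 4 := by
  by_contra hcon
  push_neg at hcon
  set T := {u ∈ G.nbhd v | 3 ≤ G.deg u} with hTdef
  have hT5 : 5 ≤ T.ncard := hcon
  have hTfin : T.Finite := by
    by_contra h
    rw [Set.Infinite.ncard h] at hT5
    omega
  have hTE : ∀ u ∈ T, (v, u) ∈ G.E := fun u hu => hv u hu.1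
  have hTY : T ⊆ G.Y := fun u hu => G.mem_snd _ (hTE u hu)
  have hvX : v ∈ G.X := by
    obtain ⟨u0, hu0⟩ : T.Nonempty := by
      rw [Set.nonempty_iff_ne_empty]
      intro h
      rw [h, Set.ncard_empty] at hT5
      omega
    exact G.mem_fst _ (hTE u0 hu0)
  have hinj : Set.InjOn py T := hD.2.mono hTY
  -- extract five neighbours in increasing `py` order
  set F0 : Finset ℝ := hTfin.toFinset.image py with hF0
  have hF0card : 5 ≤ F0.card := by
    have h1 : F0.card = hTfin.toFinset.card := by
      apply Finset.card_image_of_injOn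
      rw [Set.Finite.coe_toFinset]
      exact hinj
    have h2 : hTfin.toFinset.card = T.ncard :=
      (Set.ncard_eq_toFinset_card T hTfin).symm
    omega
  obtain ⟨F, hFsub, hFcard⟩ := Finset.exists_subset_card_eq hF0card
  set iso := F.orderIsoOfFin hFcard with hiso
  set y : Fin 5 → ℝ := fun i => (iso i : ℝ) with hy
  have ymono : ∀ i j : Fin 5, i < j → y i < y j := fun i j h =>
    Subtype.coe_lt_coe.mpr (iso.strictMono h)
  have ymem : ∀ i : Fin 5, ∃ u ∈ T, py u = y i := by
    intro i
    have hmem : y i ∈ F0 := hFsub (iso i).2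
    rw [hF0, Finset.mem_image] at hmem
    obtain ⟨u, huf, hupy⟩ := hmem
    exact ⟨u, (Set.Finite.mem_toFinset hTfin).mp huf, hupy⟩
  choose u huT hupy using ymem
  -- the geometric edge set
  set S : Set (ℝ × ℝ) := (fun e : V × V => (px e.1, py e.2)) '' G.E with hS
  have H : ∀ e ∈ S, ∀ f ∈ S, ∀ f' ∈ S,
      Cross id id e f → Cross id id e f' → ¬ PairwiseDisjoint3 e f f' := by
    rintro _ ⟨e, he, rfl⟩ _ ⟨f, hf, rfl⟩ _ ⟨f', hf', rfl⟩ hc1 hc2 hpd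
    obtain ⟨c, hc⟩ := hfan e he
    have hcf : f.1 = c ∨ f.2 = c := hc f hf hc1
    have hcf' : f'.1 = c ∨ f'.2 = c := hc f' hf' hc2
    have h11 : px f.1 ≠ px f'.1 := hpd.2.2.1
    have h22 : py f.2 ≠ py f'.2 := hpd.2.2.2.2.2
    rcases hcf with h1 | h1 <;> rcases hcf' with h2 | h2
    · exact h11 (by rw [h1, h2])
    · exact Set.disjoint_left.mp G.disj (h1 ▸ G.mem_fst f hf) (h2 ▸ G.mem_snd f' hf')
    · exact Set.disjoint_left.mp G.disj (h2 ▸ G.mem_fst f' hf') (h1 ▸ G.mem_snd f hf)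
    · exact h22 (by rw [h1, h2])
  have mv : ∀ i : Fin 5, (px v, y i) ∈ S := by
    intro i
    exact ⟨(v, u i), hTE _ (huT i), by simp [hupy i]⟩
  have two : ∀ i : Fin 5,
      ∃ a b : ℝ, a ≠ b ∧ a ≠ px v ∧ b ≠ px v ∧ (a, y i) ∈ S ∧ (b, y i) ∈ S := by
    intro i
    have huY : u i ∈ G.Y := hTY (huT i)
    have hdeg : 3 ≤ (G.nbhd (u i)).ncard := (huT i).2
    have hNfin : (G.nbhd (u i)).Finite := by
      by_contra h
      rw [Set.Infinite.ncard h] at hdeg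
      omega
    have hfd : (G.nbhd (u i) \ {v}).Finite := hNfin.diff
    have h2 : 2 ≤ (G.nbhd (u i) \ {v}).ncard := by
      have hsub : G.nbhd (u i) ⊆ insert v (G.nbhd (u i) \ {v}) := by
        intro w hw
        by_cases hwv : w = v
        · exact hwv ▸ Set.mem_insert _ _
        · exact Set.mem_insert_of_mem _ ⟨hw, hwv⟩
      have hle1 := Set.ncard_le_ncard hsub (hfd.insert v)
      have hle2 := Set.ncard_insert_le v (G.nbhd (u i) \ {v})
      omega
    obtain ⟨w1, w2, hw1, hw2, hww⟩ :=
      (Set.one_lt_ncard_iff hfd).mp (by omega)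
    have edge : ∀ w ∈ G.nbhd (u i) \ {v}, (w, u i) ∈ G.E ∧ w ∈ G.X ∧ px w ≠ px v := by
      rintro w ⟨hw, hwv⟩
      have hwv' : w ≠ v := hwv
      have hwe : (w, u i) ∈ G.E := by
        rcases hw with h | h
        · exact absurd (G.mem_fst _ h) (fun hX => Set.disjoint_left.mp G.disj hX huY)
        · exact h
      have hwX := G.mem_fst _ hwe
      exact ⟨hwe, hwX, fun hp => hwv' (hD.1 hwX hvX hp)⟩
    obtain ⟨he1, hX1, hp1⟩ := edge w1 hw1
    obtain ⟨he2, hX2, hp2⟩ := edge w2 hw2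
    refine ⟨px w1, px w2, fun hp => hww (hD.1 hX1 hX2 hp), hp1, hp2,
      ⟨(w1, u i), he1, by simp [hupy i]⟩, ⟨(w2, u i), he2, by simp [hupy i]⟩⟩
  exact core S H
    (ymono 0 1 (by decide)) (ymono 1 2 (by decide))
    (ymono 2 3 (by decide)) (ymono 3 4 (by decide))
    (mv 0) (mv 4) (two 1) (two 2) (two 3)

/-- Transposed bipartite graph. -/
private def BipGraph.tr (G : BipGraph V) : BipGraph V where
  X := G.Y
  Y := G.X
  disj := G.disj.symm
  E := Prod.swap ⁻¹' G.E
  mem_fst := fun e he => G.mem_snd _ he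
  mem_snd := fun e he => G.mem_fst _ he

private lemma cross_swap {px py : V → ℝ} {e f : V × V} (h : Cross py px e f) :
    Cross px py e.swap f.swap := by
  obtain ⟨h1, h2⟩ | ⟨h1, h2⟩ := h
  · exact Or.inr ⟨h2, h1⟩
  · exact Or.inl ⟨h2, h1⟩

private lemma tr_adj (G : BipGraph V) (a b : V) : (G.tr).Adj a b ↔ G.Adj a b := by
  unfold BipGraph.Adj BipGraph.tr
  simp [Set.mem_preimage, or_comm]

private lemma tr_nbhd (G : BipGraph V) (w : V) : (G.tr).nbhd w = G.nbhd w := by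
  ext z
  exact tr_adj G w z

private lemma tr_deg (G : BipGraph V) (w : V) : (G.tr).deg w = G.deg w := by
  unfold BipGraph.deg
  rw [tr_nbhd]

private lemma tr_fan (G : BipGraph V) (px py : V → ℝ) (hfan : FanPlanar G px py) :
    FanPlanar G.tr py px := by
  intro e he
  obtain ⟨c, hc⟩ := hfan e.swap he
  refine ⟨c, fun f hf hcr => ?_⟩
  have := hc f.swap hf (cross_swap hcr)
  exact this.symm

/-- In any 2-layer fan-planar drawing, every vertex has at most four neighbors
of degree at least 3. -/
theorem stmt14 (G : BipGraph V) (px py : V → ℝ) (hD : IsDrawing G px py)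
    (hfan : FanPlanar G px py) (v : V) :
    {u ∈ G.nbhd v | 3 ≤ G.deg u}.ncard ≤ 4 := by
  by_cases hv : ∀ u, G.Adj v u → (v, u) ∈ G.E
  · exact caseA G px py hD hfan v hv
  · push_neg at hv
    obtain ⟨u0, hu0, hne⟩ := hv
    have h0 : (u0, v) ∈ G.E := hu0.resolve_left hne
    have hvY : v ∈ G.Y := G.mem_snd _ h0
    have hv' : ∀ u, (G.tr).Adj v u → (v, u) ∈ (G.tr).E := by
      intro u hu
      rcases (tr_adj G v u).mp hu with h | h
      · exact absurd (G.mem_fst _ h) (fun hX => Set.disjoint_left.mp G.disj hX hvY)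
      · exact h
    have key := caseA G.tr py px ⟨hD.2, hD.1⟩ (tr_fan G px py hfan) v hv'
    have hset : {u ∈ (G.tr).nbhd v | 3 ≤ (G.tr).deg u} = {u ∈ G.nbhd v | 3 ≤ G.deg u} := by
      ext z
      simp [tr_nbhd, tr_deg]
    rwa [hset] at key
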